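/- For k ≥ 2, the k-generalized Lucas number admits the Binet-like formula L_n^(k) = Σ_{i=1}^{k} (2α_i − 1) f_k(α_i) α_i^(n−1), where α_1, ..., α_k are the roots of Ψ_k(x) and f_k(x) = (x−1)/(2 + (k+1)(x−2)). -/

import Mathlib

open Polynomial Finset Lagrange



-- residue sum lemma
lemma Skey {k : ℕ} (hk : 2 ≤ k) (αs : Fin k → ℂ) (hinj : Function.Injective αs)
    (m : ℕ) (hm : m < k) :
    ∑ i : Fin k, αs i ^ m * (∏ j ∈ univ.erase i, (αs i - αs j))⁻¹
      = if m = k - 1 then 1 else 0 := by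
  have hvs : Set.InjOn αs (univ : Finset (Fin k)) := hinj.injOn
  have hcard : #(univ : Finset (Fin k)) = k := by simp
  have hdeg : ((X : ℂ[X]) ^ m).degree < #(univ : Finset (Fin k)) := by
    rw [degree_X_pow, hcard]; exact_mod_cast hm
  have hinterp := Lagrange.eq_interpolate (v := αs) hvs hdeg
  have hbasis : ∀ i : Fin k, Lagrange.basis univ αs i
      = C (∏ j ∈ univ.erase i, (αs i - αs j))⁻¹ * nodal (univ.erase i) αs := by
    intro i
    simp_rw [Lagrange.basis, basisDivisor, prod_mul_distrib, ← map_prod, nodal, prod_inv_distrib]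
  have hcoeff : ∀ i : Fin k, (Lagrange.basis univ αs i).coeff (k - 1)
      = (∏ j ∈ univ.erase i, (αs i - αs j))⁻¹ := by
    intro i
    rw [hbasis i, coeff_C_mul]
    have hmon : (nodal (univ.erase i) αs).Monic := nodal_monic
    have hnd : (nodal (univ.erase i) αs).natDegree = k - 1 := by
      rw [natDegree_nodal, card_erase_of_mem (mem_univ i), hcard]
    rw [← hnd, hmon.coeff_natDegree, mul_one]
  have := congrArg (fun p => p.coeff (k - 1)) hinterp
  simp only [interpolate_apply, finset_sum_coeff, coeff_C_mul, eval_pow, eval_X,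
    coeff_X_pow, hcoeff] at this
  rw [← this]
  congr 1
  simp only [eq_iff_iff]
  omega


lemma dkey {k : ℕ} (hk : 2 ≤ k) (αs : Fin k → ℂ) (hinj : Function.Injective αs)
    (hroots : ∀ i, (αs i) ^ k = ∑ j ∈ Finset.range k, (αs i) ^ j) (i : Fin k) :
    (αs i - 1) * ∏ j ∈ univ.erase i, (αs i - αs j)
      = αs i ^ (k - 1) * ((k + 1) * αs i - 2 * k) := by
  have hvs : Set.InjOn αs (univ : Finset (Fin k)) := hinj.injOn
  have hcard : #(univ : Finset (Fin k)) = k := by simp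
  set Ψ : ℂ[X] := X ^ k - ∑ j ∈ Finset.range k, X ^ j with hΨ
  have hk0 : 0 < k := by omega
  -- degree of the geometric sum part
  have hdegS : (∑ j ∈ Finset.range k, (X : ℂ[X]) ^ j).degree < (X ^ k : ℂ[X]).degree := by
    rw [degree_X_pow]
    refine lt_of_le_of_lt (degree_sum_le _ _) ?_
    rw [Finset.sup_lt_iff (by exact_mod_cast WithBot.bot_lt_coe k)]
    intro j hj
    rw [degree_X_pow]
    exact_mod_cast Finset.mem_range.mp hj
  have hdegΨ : Ψ.degree = k := by
    rw [hΨ, degree_sub_eq_left_of_degree_lt hdegS, degree_X_pow]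
  have hlcΨ : Ψ.leadingCoeff = 1 := by
    rw [hΨ, leadingCoeff_sub_of_degree_lt hdegS, monic_X_pow]
  -- nodal = Ψ
  have hnodal : nodal (univ : Finset (Fin k)) αs = Ψ := by
    apply eq_of_degree_sub_lt_of_eval_index_eq (univ : Finset (Fin k)) hvs
    · refine lt_of_lt_of_le (degree_sub_lt ?_ nodal_ne_zero ?_) ?_
      · rw [degree_nodal, hcard, hdegΨ]
      · rw [hlcΨ]; exact nodal_monic
      · rw [degree_nodal]
    · intro j hj
      rw [eval_nodal_at_node hj, hΨ]
      simp only [eval_sub, eval_pow, eval_X, eval_finset_sum]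
      rw [hroots j]; ring
  -- derivative identity : (X - 1) * Ψ = X^(k+1) - 2 X^k + 1
  have hq : (X - 1) * Ψ = X ^ (k + 1) - 2 * X ^ k + (1 : ℂ[X]) := by
    rw [hΨ, mul_sub, mul_geom_sum]
    ring
  -- evaluate derivative of both sides at αs i
  have hderiv := congrArg (fun p => eval (αs i) (derivative p)) hq
  simp only [derivative_mul, derivative_sub, derivative_add, derivative_one, derivative_X,
    derivative_X_pow, derivative_ofNat, eval_add, eval_sub, eval_mul, eval_pow, eval_X, eval_C,
    eval_one, eval_natCast, one_mul, mul_zero, zero_mul, add_zero,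
    Polynomial.derivative_mul] at hderiv
  have hΨ0 : eval (αs i) Ψ = 0 := by
    rw [hΨ]; simp only [eval_sub, eval_pow, eval_X, eval_finset_sum]
    rw [hroots i]; ring
  have hd : eval (αs i) (derivative Ψ) * (αs i - 1)
      = (k + 1) * αs i ^ k - 2 * k * αs i ^ (k - 1) := by
    rw [hΨ0] at hderiv
    have hkk : k + 1 - 1 = k := by omega
    simp only [eval_zero, Polynomial.eval_ofNat, hkk] at hderiv
    push_cast at hderiv ⊢
    linear_combination hderiv
  have hdnodal : eval (αs i) (derivative (nodal (univ : Finset (Fin k)) αs))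
      = ∏ j ∈ univ.erase i, (αs i - αs j) := by
    rw [eval_nodal_derivative_eval_node_eq (mem_univ i), eval_nodal]
  have hkpow : αs i ^ k = αs i ^ (k - 1) * αs i := by
    rw [← pow_succ]; congr 1; omega
  rw [← hdnodal, hnodal, mul_comm, hd, hkpow]
  ring


/-- Binet-like formula: L_n^(k) = Σ_{i=1}^{k} (2α_i − 1) f_k(α_i) α_i^(n−1),
    where α_1, ..., α_k are the (distinct) complex roots of Ψ_k and
    f_k(x) = (x−1)/(2 + (k+1)(x−2)). -/
theorem lucas_binet (k : ℕ) (hk : 2 ≤ k) (L : ℤ → ℤ)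
    (hinit : ∀ j : ℤ, 2 - (k : ℤ) ≤ j → j ≤ -1 → L j = 0)
    (hL0 : L 0 = 2) (hL1 : L 1 = 1)
    (hrec : ∀ n : ℤ, 2 ≤ n → L n = ∑ i ∈ Finset.Icc (1 : ℤ) (k : ℤ), L (n - i))
    (αs : Fin k → ℂ) (hinj : Function.Injective αs)
    (hroots : ∀ i, (αs i) ^ k = ∑ j ∈ Finset.range k, (αs i) ^ j)
    (n : ℤ) (hn : 2 - (k : ℤ) ≤ n) :
    (L n : ℂ) = ∑ i : Fin k,
      (2 * αs i - 1) * ((αs i - 1) / (2 + (k + 1) * (αs i - 2))) * (αs i) ^ (n - 1) := by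
  classical
  set d : Fin k → ℂ := fun i => ∏ j ∈ univ.erase i, (αs i - αs j) with hdd
  have hα0 : ∀ i, αs i ≠ 0 := by
    intro i h
    have h1 := hroots i
    rw [h, zero_pow (by omega : k ≠ 0),
      Finset.sum_eq_single_of_mem 0 (Finset.mem_range.mpr (by omega))
        (fun b _ hb => zero_pow hb), pow_zero] at h1
    exact one_ne_zero h1.symm
  have hα1 : ∀ i, αs i ≠ 1 := by
    intro i h
    have h1 := hroots i
    rw [h] at h1
    simp only [one_pow, Finset.sum_const, card_range, nsmul_eq_mul, mul_one] at h1
    have : (k : ℂ) = 1 := h1.symm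
    have : (k : ℂ) ≠ 1 := by
      intro hc
      have : (k : ℂ) = ((1 : ℕ) : ℂ) := by exact_mod_cast hc
      have := Nat.cast_injective (R := ℂ) this
      omega
    exact this h1.symm
  have hdne : ∀ i, d i ≠ 0 := by
    intro i
    refine Finset.prod_ne_zero_iff.mpr fun j hj => sub_ne_zero_of_ne ?_
    exact fun hc => (Finset.mem_erase.mp hj).1 (hinj hc.symm)
  have hrel : ∀ i, (αs i - 1) * d i = αs i ^ (k - 1) * ((k + 1) * αs i - 2 * k) :=
    fun i => dkey hk αs hinj hroots i
  have hden : ∀ i, (k + 1) * αs i - 2 * (k:ℂ) ≠ 0 := by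
    intro i hc
    have h1 := hrel i
    rw [hc, mul_zero] at h1
    rcases mul_eq_zero.mp h1 with h | h
    · exact hα1 i (by linear_combination h)
    · exact hdne i h
  have hfrac : ∀ i, (αs i - 1) / (2 + ((k:ℂ) + 1) * (αs i - 2))
      = αs i ^ (k - 1) * (d i)⁻¹ := by
    intro i
    have h2 : 2 + ((k:ℂ) + 1) * (αs i - 2) = (k + 1) * αs i - 2 * k := by ring
    rw [h2, div_eq_iff (hden i), mul_comm (αs i ^ (k-1)) (d i)⁻¹, mul_assoc,
      inv_mul_eq_div, eq_div_iff (hdne i)]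
    linear_combination hrel i
  set T : ℤ → ℂ := fun m => ∑ i : Fin k, (2 * αs i - 1) * (d i)⁻¹ * αs i ^ (m + k - 2) with hT
  have hgoal : ∀ m : ℤ, (∑ i : Fin k,
      (2 * αs i - 1) * ((αs i - 1) / (2 + ((k:ℂ) + 1) * (αs i - 2))) * (αs i) ^ (m - 1)) = T m := by
    intro m
    refine Finset.sum_congr rfl fun i _ => ?_
    rw [hfrac i]
    have hp : (αs i) ^ (k - 1 : ℕ) * (αs i) ^ (m - 1 : ℤ) = αs i ^ (m + k - 2 : ℤ) := by
      rw [← zpow_natCast, ← zpow_add₀ (hα0 i)]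
      congr 1
      omega
    calc (2 * αs i - 1) * (αs i ^ (k-1) * (d i)⁻¹) * αs i ^ (m - 1 : ℤ)
        = (2 * αs i - 1) * (d i)⁻¹ * (αs i ^ (k-1 : ℕ) * αs i ^ (m - 1 : ℤ)) := by ring
      _ = (2 * αs i - 1) * (d i)⁻¹ * αs i ^ (m + k - 2 : ℤ) := by rw [hp]
  -- step identity for each root
  have hstep : ∀ (r : Fin k) (m : ℤ), αs r ^ (m + (k:ℤ) - 2)
      = ∑ i ∈ Finset.Icc (1:ℤ) (k:ℤ), αs r ^ (m - i + (k:ℤ) - 2) := by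
    intro r m
    have h1 : αs r ^ (m + (k:ℤ) - 2) = αs r ^ (m - 2 : ℤ) * αs r ^ (k:ℤ) := by
      rw [← zpow_add₀ (hα0 r)]
      congr 1
      ring
    rw [h1, zpow_natCast, hroots r, Finset.mul_sum]
    refine Finset.sum_bij' (i := fun (j : ℕ) (_ : j ∈ range k) => (k : ℤ) - j)
      (j := fun (i : ℤ) (_ : i ∈ Finset.Icc (1:ℤ) (k:ℤ)) => ((k:ℤ) - i).toNat) ?_ ?_ ?_ ?_ ?_
    · intro a ha
      simp only [Finset.mem_Icc]
      have := Finset.mem_range.mp ha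
      omega
    · intro a ha
      simp only [Finset.mem_range]
      have := Finset.mem_Icc.mp ha
      omega
    · intro a ha
      have := Finset.mem_range.mp ha
      omega
    · intro a ha
      have := Finset.mem_Icc.mp ha
      omega
    · intro a ha
      have ha' := Finset.mem_range.mp ha
      rw [← zpow_natCast (αs r) a, ← zpow_add₀ (hα0 r)]
      congr 1
      omega
  have hTrec : ∀ m : ℤ, T m = ∑ i ∈ Finset.Icc (1:ℤ) (k:ℤ), T (m - i) := by
    intro m
    rw [hT]
    simp only []
    rw [Finset.sum_comm]
    refine Finset.sum_congr rfl fun r _ => ?_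
    rw [← Finset.mul_sum, hstep r m]
  -- base cases
  have hSval : ∀ t : ℕ, t < k → (∑ i : Fin k, αs i ^ t * (d i)⁻¹)
      = if t = k - 1 then 1 else 0 := fun t ht => Skey hk αs hinj t ht
  have hSk : (∑ i : Fin k, αs i ^ k * (d i)⁻¹) = 1 := by
    have h1 : ∀ i : Fin k, αs i ^ k * (d i)⁻¹ = ∑ j ∈ range k, αs i ^ j * (d i)⁻¹ := by
      intro i
      rw [hroots i, Finset.sum_mul]
    simp_rw [h1]
    rw [Finset.sum_comm]
    have h2 : ∀ j ∈ range k, (∑ i : Fin k, αs i ^ j * (d i)⁻¹) = if j = k - 1 then 1 else 0 :=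
      fun j hj => hSval j (Finset.mem_range.mp hj)
    rw [Finset.sum_congr rfl h2, Finset.sum_ite_eq' (range k) (k-1) (fun _ => (1:ℂ))]
    simp only [Finset.mem_range]
    rw [if_pos (by omega)]
  have hbase : ∀ m : ℤ, 2 - (k:ℤ) ≤ m → m ≤ 1 → (L m : ℂ) = T m := by
    intro m h1 h2
    obtain ⟨t, ht⟩ : ∃ t : ℕ, (m + (k:ℤ) - 2) = t := ⟨(m + k - 2).toNat, by omega⟩
    have htk : t ≤ k - 1 := by omega
    have hTm : T m = 2 * (∑ i : Fin k, αs i ^ (t+1) * (d i)⁻¹)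
        - (∑ i : Fin k, αs i ^ t * (d i)⁻¹) := by
      rw [hT]
      simp only []
      rw [Finset.mul_sum, ← Finset.sum_sub_distrib]
      refine Finset.sum_congr rfl fun i _ => ?_
      rw [ht, zpow_natCast]
      ring
    rcases lt_trichotomy m 0 with hm | hm | hm
    · have hL : L m = 0 := hinit m h1 (by omega)
      have ht1 : t ≠ k - 1 := by omega
      have ht2 : t + 1 ≠ k - 1 := by omega
      rw [hL, hTm, hSval t (by omega), hSval (t+1) (by omega), if_neg ht1, if_neg ht2]
      norm_num
    · subst hm
      have ht0 : t = k - 2 := by omega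
      rw [hL0, hTm, hSval t (by omega)]
      have : t + 1 = k - 1 := by omega
      rw [this, hSval (k-1) (by omega), if_pos rfl, if_neg (by omega)]
      norm_num
    · have hm1 : m = 1 := by omega
      subst hm1
      have ht0 : t = k - 1 := by omega
      have ht1 : t + 1 = k := by omega
      rw [hL1, hTm, ht1, hSk, hSval t (by omega), if_pos ht0]
      norm_num
  -- induction
  have hmain : ∀ N : ℕ, ∀ m : ℤ, 2 - (k:ℤ) ≤ m → m ≤ 2 - (k:ℤ) + N → (L m : ℂ) = T m := by
    intro N
    induction N with
    | zero => intro m hm1 hm2; exact hbase m hm1 (by omega)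
    | succ N ih =>
      intro m hm1 hm2
      rcases le_or_gt m (2 - (k:ℤ) + N) with h | h
      · exact ih m hm1 h
      · by_cases hm3 : m ≤ 1
        · exact hbase m hm1 hm3
        · have hm4 : 2 ≤ m := by omega
          rw [hrec m hm4, hTrec m]
          push_cast
          refine Finset.sum_congr rfl fun i hi => ?_
          have hii := Finset.mem_Icc.mp hi
          exact ih (m - i) (by omega) (by omega)
  rw [hgoal n]
  exact hmain (n - (2 - k)).toNat n hn (by omega)
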